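/- If a pair (λ⁰, h⁰) ∈ Λ^M × R^n satisfies both h⁰ = (1/ν)Y − ((1−ν)/ν) f_{λ⁰} and λ⁰_j = π_j exp(−ν‖f_j − h⁰‖²/(2ω²)) / ∑_i π_i exp(−ν‖f_i − h⁰‖²/(2ω²)) for all j, then Q(λ⁰) = T(h⁰). -/

import Mathlib

open Real Finset

theorem saddle_point_Q_eq_T (n M : ℕ) (Y : EuclideanSpace ℝ (Fin n))
    (f : Fin M → EuclideanSpace ℝ (Fin n)) (pi : Fin M → ℝ)
    (hpi : ∀ j, 0 < pi j) (hpi1 : ∑ j, pi j = 1)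
    (ν ω : ℝ) (hν : ν ∈ Set.Ioo (0:ℝ) 1) (hω : 0 < ω)
    (Q : (Fin M → ℝ) → ℝ)
    (hQ : ∀ lam, Q lam = ‖(∑ j, lam j • f j) - Y‖^2
        + ν * ∑ j, lam j * ‖f j - ∑ i, lam i • f i‖^2
        + 2*ω^2 * ∑ j, lam j * Real.log (lam j / pi j))
    (T : EuclideanSpace ℝ (Fin n) → ℝ)
    (hT : ∀ h, T h = -(ν/(1-ν)) * ‖h - Y‖^2
        - 2*ω^2 * Real.log (∑ j, pi j * Real.exp (-ν * ‖f j - h‖^2 / (2*ω^2))))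
    (lam0 : Fin M → ℝ) (hlam0 : lam0 ∈ stdSimplex ℝ (Fin M))
    (h0 : EuclideanSpace ℝ (Fin n))
    (hA : h0 = (1/ν) • Y - ((1-ν)/ν) • ∑ j, lam0 j • f j)
    (hB : ∀ j, lam0 j = pi j * Real.exp (-ν * ‖f j - h0‖^2 / (2*ω^2))
        / ∑ i, pi i * Real.exp (-ν * ‖f i - h0‖^2 / (2*ω^2))) :
    Q lam0 = T h0 := by
  obtain ⟨hν0, hν1⟩ := hν
  have hν0' : ν ≠ 0 := ne_of_gt hν0
  have h1ν : (0:ℝ) < 1 - ν := by linarith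
  have hω' : ω ≠ 0 := ne_of_gt hω
  have hsum1 : ∑ j, lam0 j = 1 := hlam0.2
  have hM : (Finset.univ : Finset (Fin M)).Nonempty := by
    by_contra h
    rw [Finset.not_nonempty_iff_eq_empty] at h
    rw [h] at hsum1
    simp at hsum1
  set F : EuclideanSpace ℝ (Fin n) := ∑ j, lam0 j • f j with hF
  set S : ℝ := ∑ i, pi i * Real.exp (-ν * ‖f i - h0‖^2 / (2*ω^2)) with hS
  have hSpos : 0 < S :=
    Finset.sum_pos (fun i _ => mul_pos (hpi i) (Real.exp_pos _)) hM
  -- vector identities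
  have hFY : F - Y = ν • (F - h0) := by
    rw [hA]
    match_scalars <;> field_simp <;> ring
  have hHY : h0 - Y = (1 - ν) • (h0 - F) := by
    rw [hA]
    match_scalars <;> field_simp <;> ring
  have h1 : ‖F - Y‖^2 = ν^2 * ‖F - h0‖^2 := by
    rw [hFY, norm_smul, Real.norm_eq_abs, abs_of_pos hν0, mul_pow]
  have h2 : ‖h0 - Y‖^2 = (1-ν)^2 * ‖F - h0‖^2 := by
    rw [hHY, norm_smul, Real.norm_eq_abs, abs_of_pos h1ν, mul_pow, norm_sub_rev]
  -- bias-variance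
  have hzero : (∑ j, lam0 j • (f j - F)) = 0 := by
    have : (∑ j, lam0 j • (f j - F)) = (∑ j, lam0 j • f j) - (∑ j, lam0 j) • F := by
      rw [Finset.sum_smul]
      simp [smul_sub, Finset.sum_sub_distrib]
    rw [this, hsum1, one_smul, ← hF, sub_self]
  have hbv : ∑ j, lam0 j * ‖f j - h0‖^2
      = (∑ j, lam0 j * ‖f j - F‖^2) + ‖F - h0‖^2 := by
    have hexp : ∀ j, ‖f j - h0‖^2
        = ‖f j - F‖^2 + 2 * (inner ℝ (f j - F) (F - h0) : ℝ) + ‖F - h0‖^2 := by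
      intro j
      have h := norm_add_sq_real (f j - F) (F - h0)
      rw [sub_add_sub_cancel] at h
      linarith
    calc ∑ j, lam0 j * ‖f j - h0‖^2
        = ∑ j, (lam0 j * ‖f j - F‖^2
            + 2 * (inner ℝ (lam0 j • (f j - F)) (F - h0) : ℝ)
            + lam0 j * ‖F - h0‖^2) := by
          refine Finset.sum_congr rfl fun j _ => ?_
          rw [hexp j, real_inner_smul_left]
          ring
      _ = (∑ j, lam0 j * ‖f j - F‖^2)
            + 2 * (inner ℝ (∑ j, lam0 j • (f j - F)) (F - h0) : ℝ)
            + (∑ j, lam0 j) * ‖F - h0‖^2 := by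
          rw [Finset.sum_add_distrib, Finset.sum_add_distrib, sum_inner,
            ← Finset.mul_sum, ← Finset.sum_mul]
      _ = (∑ j, lam0 j * ‖f j - F‖^2) + ‖F - h0‖^2 := by
          rw [hzero, hsum1, inner_zero_left]
          ring
  -- KL term
  have hKL : ∑ j, lam0 j * Real.log (lam0 j / pi j)
      = -ν/(2*ω^2) * (∑ j, lam0 j * ‖f j - h0‖^2) - Real.log S := by
    have hlog : ∀ j, lam0 j * Real.log (lam0 j / pi j)
        = lam0 j * (-ν * ‖f j - h0‖^2 / (2*ω^2)) - lam0 j * Real.log S := by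
      intro j
      have hratio : lam0 j / pi j
          = Real.exp (-ν * ‖f j - h0‖^2 / (2*ω^2)) / S := by
        rw [hB j, div_div, mul_comm S (pi j), ← div_div,
          mul_div_cancel_left₀ _ (ne_of_gt (hpi j))]
      rw [hratio, Real.log_div (Real.exp_ne_zero _) (ne_of_gt hSpos),
        Real.log_exp]
      ring
    calc ∑ j, lam0 j * Real.log (lam0 j / pi j)
        = ∑ j, (lam0 j * (-ν * ‖f j - h0‖^2 / (2*ω^2)) - lam0 j * Real.log S) :=
          Finset.sum_congr rfl fun j _ => hlog j
      _ = (∑ j, lam0 j * (-ν * ‖f j - h0‖^2 / (2*ω^2)))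
            - (∑ j, lam0 j) * Real.log S := by
          rw [Finset.sum_sub_distrib, Finset.sum_mul]
      _ = -ν/(2*ω^2) * (∑ j, lam0 j * ‖f j - h0‖^2) - Real.log S := by
          rw [hsum1, one_mul, Finset.mul_sum]
          congr 1
          refine Finset.sum_congr rfl fun j _ => ?_
          ring
  -- assemble
  rw [hQ, hT, ← hF, ← hS, h1, h2, hKL, hbv]
  have hω2 : ω^2 ≠ 0 := pow_ne_zero _ hω'
  field_simp
  ring
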